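/- (Case 2 descent) Let $p \ge 5$ be a prime and let $x, r, y$ be integers with $\gcd(x,r) = 1$, $r \ge 1$, satisfying $(x-3r)^3+(x-2r)^3+(x-r)^3+x^3+(x+r)^3+(x+2r)^3+(x+3r)^3 = y^p$. Suppose $7 \nmid x$, $2 \nmid x$ and $3 \mid x$. Then there exist integers $w_1, w_2$ with $x = 3^{p-1} w_1^p$, $x^2 + 12r^2 = 3 \cdot 7^{p-1} w_2^p$, and consequently $7^{p-1} w_2^p - 3^{2p-3} w_1^{2p} = 4 r^2$. -/

import Mathlib

theorem case2_descent
    (p : ℕ) (hp : p.Prime) (hp5 : 5 ≤ p)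
    (x r y : ℤ) (hgcd : Int.gcd x r = 1) (hr : 1 ≤ r)
    (heq : (x - 3 * r) ^ 3 + (x - 2 * r) ^ 3 + (x - r) ^ 3 + x ^ 3 +
      (x + r) ^ 3 + (x + 2 * r) ^ 3 + (x + 3 * r) ^ 3 = y ^ p)
    (h7 : ¬ (7 : ℤ) ∣ x) (h2 : ¬ (2 : ℤ) ∣ x) (h3 : (3 : ℤ) ∣ x) :
    ∃ w₁ w₂ : ℤ, x = 3 ^ (p - 1) * w₁ ^ p ∧ x ^ 2 + 12 * r ^ 2 = 3 * 7 ^ (p - 1) * w₂ ^ p ∧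
      7 ^ (p - 1) * w₂ ^ p - 3 ^ (2 * p - 3) * w₁ ^ (2 * p) = 4 * r ^ 2 := by
  have hprime7 : Prime (7 : ℤ) := by norm_num
  have hprime3 : Prime (3 : ℤ) := by norm_num
  have hprime2 : Prime (2 : ℤ) := by norm_num
  obtain ⟨k, rfl⟩ : ∃ k, p = k + 5 := ⟨p - 5, by omega⟩
  have he1 : k + 5 - 1 = k + 4 := by omega
  have he2 : 2 * (k + 5) - 3 = 2 * k + 7 := by omega
  have he3 : 2 * (k + 5) = 2 * k + 10 := by omega
  have hodd : Odd (k + 5) := hp.odd_of_ne_two (by omega)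
  have key : 7 * (x * (x ^ 2 + 12 * r ^ 2)) = y ^ (k + 5) := by rw [← heq]; ring
  -- 7 ∣ y
  have h7y : (7 : ℤ) ∣ y := hprime7.dvd_of_dvd_pow ⟨_, key.symm⟩
  obtain ⟨w, rfl⟩ := h7y
  have key2 : x * (x ^ 2 + 12 * r ^ 2) = 7 ^ (k + 4) * w ^ (k + 5) := by
    have h7ne : (7 : ℤ) ≠ 0 := by norm_num
    apply mul_left_cancel₀ h7ne
    rw [key, mul_pow, show k + 5 = (k + 4) + 1 from rfl, pow_succ']; ring
  obtain ⟨x', rfl⟩ := h3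
  have h3r : ¬ (3 : ℤ) ∣ r := by
    intro hdr
    have : (3 : ℤ) ∣ (Int.gcd (3 * x') r : ℤ) := Int.dvd_coe_gcd ⟨x', rfl⟩ hdr
    rw [hgcd] at this
    norm_num at this
  set M : ℤ := 3 * x' ^ 2 + 4 * r ^ 2 with hMdef
  have hN : (3 * x') ^ 2 + 12 * r ^ 2 = 3 * M := by rw [hMdef]; ring
  have h3M : ¬ (3 : ℤ) ∣ M := by
    intro hdM
    have : (3 : ℤ) ∣ 4 * r ^ 2 := by
      have := dvd_sub hdM (Dvd.intro (x' ^ 2) rfl)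
      simpa [hMdef] using this
    rcases hprime3.dvd_mul.mp this with h | h
    · norm_num at h
    · exact h3r (hprime3.dvd_of_dvd_pow h)
  have h7x' : ¬ (7 : ℤ) ∣ x' := fun h => h7 (h.mul_left 3)
  have h2x' : ¬ (2 : ℤ) ∣ x' := fun h => h2 (h.mul_left 3)
  have key3 : 9 * x' * M = 7 ^ (k + 4) * w ^ (k + 5) := by
    rw [← key2, hN]; ring
  -- 7^(k+4) divides M
  have hcop79 : IsCoprime ((7 : ℤ) ^ (k + 4)) (9 * x') := by
    apply IsCoprime.pow_left
    rw [hprime7.coprime_iff_not_dvd]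
    intro h
    rcases hprime7.dvd_mul.mp h with h | h
    · norm_num at h
    · exact h7x' h
  have h7M : (7 : ℤ) ^ (k + 4) ∣ M :=
    hcop79.dvd_of_dvd_mul_right ⟨w ^ (k + 5), by linarith [key3]⟩
  obtain ⟨M', hM'⟩ := h7M
  have key4 : (9 * x') * M' = w ^ (k + 5) := by
    have h7ne : ((7 : ℤ) ^ (k + 4)) ≠ 0 := by positivity
    apply mul_left_cancel₀ h7ne
    rw [← key3, hM']; ring
  -- coprimality of 9*x' and M'
  have hM'dvdM : M' ∣ M := ⟨7 ^ (k + 4), by rw [hM']; ring⟩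
  have hcx'r : IsCoprime x' r := by
    have : IsCoprime (3 * x') r := Int.isCoprime_iff_gcd_eq_one.mpr hgcd
    exact IsCoprime.of_isCoprime_of_dvd_left this ⟨3, by ring⟩
  have hcx'2 : IsCoprime x' (2 : ℤ) := by
    rw [isCoprime_comm, hprime2.coprime_iff_not_dvd]; exact h2x'
  have hcx'4r : IsCoprime x' (4 * r ^ 2) := by
    have : (4 : ℤ) * r ^ 2 = 2 * 2 * (r * r) := by ring
    rw [this]
    exact ((hcx'2.mul_right hcx'2).mul_right (hcx'r.mul_right hcx'r))
  have hcx'M' : IsCoprime x' M' := by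
    rw [Int.isCoprime_iff_gcd_eq_one]
    by_contra hne
    set g := Int.gcd x' M' with hg
    have hgx' : (g : ℤ) ∣ x' := Int.gcd_dvd_left x' M'
    have hgM' : (g : ℤ) ∣ M' := Int.gcd_dvd_right x' M'
    have hg4r : (g : ℤ) ∣ 4 * r ^ 2 := by
      have hh1 : (g : ℤ) ∣ M := hgM'.trans hM'dvdM
      have hh2 : (g : ℤ) ∣ 3 * x' ^ 2 := (hgx'.trans ⟨x', sq x'⟩).mul_left 3
      have := dvd_sub hh1 hh2
      simpa [hMdef] using this
    have : IsUnit ((g : ℤ)) := hcx'4r.isUnit_of_dvd' hgx' hg4r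
    rw [Int.isUnit_iff] at this
    rcases this with h | h
    · exact hne (by exact_mod_cast h)
    · omega
  have hc3M' : IsCoprime (3 : ℤ) M' := by
    rw [hprime3.coprime_iff_not_dvd]
    intro h
    exact h3M (by rw [hM']; exact h.mul_left _)
  have hc9M' : IsCoprime (9 * x') M' := by
    have : (9 : ℤ) * x' = 3 * 3 * x' := by ring
    rw [this]
    exact ((hc3M'.mul_left hc3M').mul_left hcx'M')
  -- descent
  obtain ⟨d, hd⟩ := Int.eq_pow_of_mul_eq_pow_odd_left hc9M' hodd key4
  obtain ⟨c, hc⟩ := Int.eq_pow_of_mul_eq_pow_odd_right hc9M' hodd key4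
  have h3d : (3 : ℤ) ∣ d := by
    apply hprime3.dvd_of_dvd_pow (n := k + 5)
    rw [← hd]; exact ⟨3 * x', by ring⟩
  obtain ⟨e, rfl⟩ := h3d
  have hx' : x' = 3 ^ (k + 3) * e ^ (k + 5) := by
    have h9 : (9 : ℤ) ≠ 0 := by norm_num
    apply mul_left_cancel₀ h9
    rw [hd, mul_pow, show k + 5 = (k + 3) + 2 from by omega, pow_add]; ring
  refine ⟨e, c, ?_, ?_, ?_⟩
  · rw [hx', he1, show k + 4 = (k + 3) + 1 from rfl, pow_succ]; ring
  · rw [hN, hM', hc, he1]; ring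
  · have hxval : 3 * x' = 3 ^ (k + 4) * e ^ (k + 5) := by
      rw [hx', show k + 4 = (k + 3) + 1 from rfl, pow_succ]; ring
    have hNval : (3 ^ (k + 4) * e ^ (k + 5)) ^ 2 + 12 * r ^ 2
        = 3 * 7 ^ (k + 4) * c ^ (k + 5) := by
      rw [← hxval, hN, hM', hc]; ring
    have h3ne : (3 : ℤ) ≠ 0 := by norm_num
    rw [he1, he2, he3]
    apply mul_left_cancel₀ h3ne
    have expand : ((3 : ℤ) ^ (k + 4) * e ^ (k + 5)) ^ 2 = 3 * 3 ^ (2 * k + 7) * e ^ (2 * k + 10) := by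
      rw [mul_pow, ← pow_mul, ← pow_mul, show (k + 4) * 2 = (2 * k + 7) + 1 from by omega,
        show (k + 5) * 2 = 2 * k + 10 from by omega, pow_succ]; ring
    rw [expand] at hNval
    linarith [hNval]
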